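/- For finite positive measures V, Ṽ on a Polish space X, the functional E(V | Ṽ) := sup over bounded continuous φ of (∫φ dV − ∫(e^φ − 1) dṼ) equals ∫ log(dV/dṼ) dV − V(X) + Ṽ(X) if V ≪ Ṽ, and +∞ otherwise. -/

import Mathlib

open MeasureTheory

/-- The extended relative entropy functional for finite positive measures, defined via the
dual variational formula `E(V | Ṽ) = sup_{φ ∈ C_b(X)} { V(φ) − Ṽ(e^φ − 1) }`. -/
noncomputable def Efun {X : Type*} [MeasurableSpace X] [TopologicalSpace X]
    (V W : Measure X) : EReal :=
  ⨆ φ : BoundedContinuousFunction X ℝ,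
    ((∫ x, φ x ∂V - ∫ x, (Real.exp (φ x) - 1) ∂W : ℝ) : EReal)

open Real Filter Topology
open scoped ENNReal
set_option linter.unusedSectionVars false
set_option maxHeartbeats 1600000

section Helpers


variable {X : Type*} [MeasurableSpace X]

/-- The functional being supremized. -/
noncomputable def Fr (V W : Measure X) (ψ : X → ℝ) : ℝ :=
  ∫ x, ψ x ∂V - ∫ x, (Real.exp (ψ x) - 1) ∂W

lemma integrable_of_bdd {μ : Measure X} [IsFiniteMeasure μ] {ψ : X → ℝ}
    (hm : AEStronglyMeasurable ψ μ) {C : ℝ} (hb : ∀ x, |ψ x| ≤ C) : Integrable ψ μ :=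
  Integrable.mono' (integrable_const C) hm (Filter.Eventually.of_forall hb)

lemma clamp_abs_sub {a b c : ℝ} (hb : |b| ≤ c) : |min (max a (-c)) c - b| ≤ |a - b| := by
  rw [abs_le] at hb ⊢
  rcases le_total a (-c) with h | h <;> rcases le_total a c with h' | h' <;>
    simp only [min_def, max_def] <;> split_ifs <;> constructor <;>
    linarith [le_abs_self (a - b), neg_abs_le (a - b)]

lemma exp_sub_exp_abs_le {a b c : ℝ} (ha : a ≤ c) (hb : b ≤ c) :
    |Real.exp a - Real.exp b| ≤ Real.exp c * |a - b| := by
  wlog hab : b ≤ a generalizing a b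
  · rw [abs_sub_comm, abs_sub_comm a b]; exact this hb ha (le_of_not_ge hab)
  have h1 : Real.exp b ≤ Real.exp a := Real.exp_le_exp.2 hab
  have h2 : Real.exp a ≤ Real.exp c := Real.exp_le_exp.2 ha
  rw [abs_of_nonneg (by linarith), abs_of_nonneg (by linarith)]
  have h4 : Real.exp a * (b - a + 1) ≤ Real.exp a * Real.exp (b - a) :=
    mul_le_mul_of_nonneg_left (Real.add_one_le_exp (b - a)) (Real.exp_pos a).le
  rw [← Real.exp_add] at h4
  simp only [add_sub_cancel] at h4
  nlinarith

lemma young_ineq {a : ℝ} (ha : 0 ≤ a) (b : ℝ) : a * b ≤ a * Real.log a - a + Real.exp b := by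
  rcases eq_or_lt_of_le ha with h | h
  · simpa [← h] using (Real.exp_pos b).le
  · have h1 : b - Real.log a + 1 ≤ Real.exp (b - Real.log a) := Real.add_one_le_exp _
    have h2 : a * Real.exp (b - Real.log a) = Real.exp b := by
      rw [Real.exp_sub, Real.exp_log h]; field_simp
    nlinarith [mul_le_mul_of_nonneg_left h1 ha]

lemma mul_neg_log_le_one {t : ℝ} (ht : 0 ≤ t) : t * max (-Real.log t) 0 ≤ 1 := by
  rcases eq_or_lt_of_le ht with h | h
  · simp [← h]
  · rcases le_total 1 t with h1 | h1
    · have : Real.log t ≥ 0 := Real.log_nonneg h1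
      simp [max_eq_right (by linarith : -Real.log t ≤ 0)]
    · have hlog : Real.log t⁻¹ ≤ t⁻¹ - 1 := Real.log_le_sub_one_of_pos (by positivity)
      rw [Real.log_inv] at hlog
      rcases le_total (-Real.log t) 0 with h2 | h2
      · simp [max_eq_right h2]
      · rw [max_eq_left h2]
        have ht' : t * t⁻¹ = 1 := mul_inv_cancel₀ h.ne'
        nlinarith

end Helpers

section Seq

variable {X : Type*} [MeasurableSpace X] (V W : Measure X) [IsFiniteMeasure V] [IsFiniteMeasure W]

/-- Truncated log-density. -/
noncomputable def psin (n : ℕ) (x : X) : ℝ :=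
  Real.log (min (max ((V.rnDeriv W x).toReal) (Real.exp (-(n : ℝ)))) (Real.exp (n : ℝ)))

lemma psin_measurable (n : ℕ) : Measurable (psin V W n) :=
  (((Measure.measurable_rnDeriv V W).ennreal_toReal.max measurable_const).min
    measurable_const).log

lemma clamp_mem (n : ℕ) (x : X) :
    Real.exp (-(n : ℝ)) ≤ min (max ((V.rnDeriv W x).toReal) (Real.exp (-(n : ℝ))))
        (Real.exp (n : ℝ))
      ∧ min (max ((V.rnDeriv W x).toReal) (Real.exp (-(n : ℝ)))) (Real.exp (n : ℝ))
        ≤ Real.exp (n : ℝ) := by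
  constructor
  · refine le_min (le_max_right _ _) (Real.exp_le_exp.2 (neg_le_self (Nat.cast_nonneg n)))
  · exact min_le_right _ _

lemma psin_abs_le (n : ℕ) (x : X) : |psin V W n x| ≤ (n : ℝ) := by
  obtain ⟨h1, h2⟩ := clamp_mem V W n x
  have hpos : (0:ℝ) < min (max ((V.rnDeriv W x).toReal) (Real.exp (-(n : ℝ))))
      (Real.exp (n : ℝ)) := lt_of_lt_of_le (Real.exp_pos _) h1
  rw [abs_le]
  constructor
  · rw [← Real.log_exp (-(n:ℝ))]
    exact Real.log_le_log (Real.exp_pos _) h1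
  · rw [← Real.log_exp (n:ℝ)]
    exact Real.log_le_log hpos h2

lemma exp_psin (n : ℕ) (x : X) :
    Real.exp (psin V W n x)
      = min (max ((V.rnDeriv W x).toReal) (Real.exp (-(n : ℝ)))) (Real.exp (n : ℝ)) :=
  Real.exp_log (lt_of_lt_of_le (Real.exp_pos _) (clamp_mem V W n x).1)

lemma psin_integrable (n : ℕ) {μ : Measure X} [IsFiniteMeasure μ] : Integrable (psin V W n) μ :=
  Integrable.mono' (integrable_const (n:ℝ)) (psin_measurable V W n).aestronglyMeasurable
    (Eventually.of_forall (psin_abs_le V W n))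

/-- Convergence of `∫ exp (psin n) dW` to `∫ (dV/dW) dW`. -/
lemma tendsto_integral_exp_psin :
    Tendsto (fun n : ℕ => ∫ x, Real.exp (psin V W n x) ∂W) atTop
      (𝓝 (∫ x, (V.rnDeriv W x).toReal ∂W)) := by
  refine tendsto_integral_of_dominated_convergence
    (fun x => (V.rnDeriv W x).toReal + 1) (fun n =>
      (Real.continuous_exp.measurable.comp (psin_measurable V W n)).aestronglyMeasurable)
    (Measure.integrable_toReal_rnDeriv.add (integrable_const 1)) (fun n => ?_) ?_
  · refine Eventually.of_forall fun x => ?_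
    rw [Real.norm_eq_abs, abs_of_nonneg (Real.exp_pos _).le, exp_psin]
    have h0 : (0:ℝ) ≤ (V.rnDeriv W x).toReal := ENNReal.toReal_nonneg
    have : Real.exp (-(n:ℝ)) ≤ 1 := Real.exp_le_one_iff.2 (neg_nonpos.2 (Nat.cast_nonneg n))
    calc min (max ((V.rnDeriv W x).toReal) (Real.exp (-(n : ℝ)))) (Real.exp (n : ℝ))
        ≤ max ((V.rnDeriv W x).toReal) (Real.exp (-(n : ℝ))) := min_le_left _ _
      _ ≤ (V.rnDeriv W x).toReal + 1 := max_le (by linarith) (by linarith)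
  · refine Eventually.of_forall fun x => ?_
    simp only [exp_psin]
    set t : ℝ := (V.rnDeriv W x).toReal with ht
    have h0 : 0 ≤ t := ENNReal.toReal_nonneg
    rcases eq_or_lt_of_le h0 with h | h
    · -- t = 0 : the clamp is exp (-n) → 0
      have heq : ∀ n : ℕ, min (max t (Real.exp (-(n : ℝ)))) (Real.exp (n : ℝ))
          = Real.exp (-(n : ℝ)) := by
        intro n
        rw [← h, max_eq_right (Real.exp_pos _).le]
        exact min_eq_left (Real.exp_le_exp.2 (neg_le_self (Nat.cast_nonneg n)))
      simp only [heq]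
      rw [← h]
      have : Tendsto (fun n : ℕ => -(n:ℝ)) atTop atBot :=
        tendsto_neg_atBot_iff.2 tendsto_natCast_atTop_atTop
      exact Real.tendsto_exp_atBot.comp this
    · -- t > 0 : eventually constant equal to t
      refine tendsto_const_nhds.congr' ?_
      filter_upwards [eventually_ge_atTop ⌈|Real.log t|⌉₊] with n hn
      have hn' : |Real.log t| ≤ (n:ℝ) := (Nat.le_ceil _).trans (Nat.cast_le.2 hn)
      rw [abs_le] at hn'
      have h1 : Real.exp (-(n:ℝ)) ≤ t := by
        rw [← Real.exp_log h]; exact Real.exp_le_exp.2 (by linarith)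
      have h2 : t ≤ Real.exp (n:ℝ) := by
        rw [← Real.exp_log h]; exact Real.exp_le_exp.2 (by linarith)
      rw [max_eq_left h1, min_eq_left h2]

/-- With AC and integrability: convergence of `∫ psin n dV`. -/
lemma tendsto_integral_psin (hAC : V ≪ W)
    (hInt : Integrable (fun x => Real.log ((V.rnDeriv W x).toReal)) V) :
    Tendsto (fun n : ℕ => ∫ x, psin V W n x ∂V) atTop
      (𝓝 (∫ x, Real.log ((V.rnDeriv W x).toReal) ∂V)) := by
  have hpos : ∀ᵐ x ∂V, 0 < V.rnDeriv W x := Measure.rnDeriv_pos hAC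
  have hlt : ∀ᵐ x ∂V, V.rnDeriv W x < ∞ := hAC.ae_le (Measure.rnDeriv_lt_top V W)
  refine tendsto_integral_of_dominated_convergence
    (fun x => |Real.log ((V.rnDeriv W x).toReal)|)
    (fun n => (psin_measurable V W n).aestronglyMeasurable) hInt.abs (fun n => ?_) ?_
  · filter_upwards [hpos, hlt] with x hx hx'
    have ht : 0 < (V.rnDeriv W x).toReal := ENNReal.toReal_pos hx.ne' hx'.ne
    set t : ℝ := (V.rnDeriv W x).toReal
    rw [Real.norm_eq_abs]
    -- |log (clamp t)| ≤ |log t|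
    unfold psin
    rcases le_total 1 t with h1 | h1
    · -- t ≥ 1 : clamp t ∈ [1, t], log ∈ [0, log t]
      have hc1 : (1:ℝ) ≤ min (max t (Real.exp (-(n : ℝ)))) (Real.exp (n : ℝ)) :=
        le_min (le_max_of_le_left h1) (Real.one_le_exp (Nat.cast_nonneg n))
      have hc2 : min (max t (Real.exp (-(n : ℝ)))) (Real.exp (n : ℝ)) ≤ t := by
        rw [max_eq_left ((Real.exp_le_one_iff.2 (neg_nonpos.2 (Nat.cast_nonneg n))).trans h1)]
        exact min_le_left _ _
      rw [abs_of_nonneg (Real.log_nonneg hc1), abs_of_nonneg (Real.log_nonneg h1)]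
      exact Real.log_le_log (by linarith) hc2
    · -- t ≤ 1 : clamp t ∈ [t, 1], log ∈ [log t, 0]
      have hc1 : t ≤ min (max t (Real.exp (-(n : ℝ)))) (Real.exp (n : ℝ)) :=
        le_min (le_max_left _ _) (h1.trans (Real.one_le_exp (Nat.cast_nonneg n)))
      have hc2 : min (max t (Real.exp (-(n : ℝ)))) (Real.exp (n : ℝ)) ≤ 1 := by
        refine le_trans (min_le_left _ _) (max_le h1 (Real.exp_le_one_iff.2 (neg_nonpos.2 (Nat.cast_nonneg n))))
      have hcpos : 0 < min (max t (Real.exp (-(n : ℝ)))) (Real.exp (n : ℝ)) :=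
        lt_of_lt_of_le ht hc1
      rw [abs_of_nonpos (Real.log_nonpos (by positivity) hc2),
        abs_of_nonpos (Real.log_nonpos ht.le h1)]
      exact neg_le_neg (Real.log_le_log ht hc1)
  · filter_upwards [hpos, hlt] with x hx hx'
    have ht : 0 < (V.rnDeriv W x).toReal := ENNReal.toReal_pos hx.ne' hx'.ne
    set t : ℝ := (V.rnDeriv W x).toReal
    refine tendsto_const_nhds.congr' ?_
    filter_upwards [eventually_ge_atTop ⌈|Real.log t|⌉₊] with n hn
    have hn' : |Real.log t| ≤ (n:ℝ) := (Nat.le_ceil _).trans (Nat.cast_le.2 hn)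
    rw [abs_le] at hn'
    have h1 : Real.exp (-(n:ℝ)) ≤ t := by
      rw [← Real.exp_log ht]; exact Real.exp_le_exp.2 (by linarith)
    have h2 : t ≤ Real.exp (n:ℝ) := by
      rw [← Real.exp_log ht]; exact Real.exp_le_exp.2 (by linarith)
    unfold psin
    rw [max_eq_left h1, min_eq_left h2]

end Seq

section Approx

variable {X : Type*} [MeasurableSpace X] [TopologicalSpace X] [PolishSpace X] [BorelSpace X]
  (V W : Measure X) [IsFiniteMeasure V] [IsFiniteMeasure W]

lemma exp_integrable {μ : Measure X} [IsFiniteMeasure μ] {ψ : X → ℝ}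
    (hm : AEStronglyMeasurable ψ μ) {C : ℝ} (hb : ∀ x, |ψ x| ≤ C) :
    Integrable (fun x => Real.exp (ψ x) - 1) μ := by
  refine (integrable_of_bdd (C := Real.exp C) ?_ ?_).sub (integrable_const 1)
  · exact (Real.continuous_exp.comp_aestronglyMeasurable hm)
  · intro x
    rw [abs_of_nonneg (Real.exp_pos _).le]
    exact Real.exp_le_exp.2 ((le_abs_self _).trans (hb x))

/-- Key approximation lemma: the value of `Fr` at any bounded measurable function is a lower
bound for `Efun`. -/
lemma Fr_le_Efun {ψ : X → ℝ} (hψ : Measurable ψ) {C : ℝ} (hC : 0 ≤ C)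
    (hb : ∀ x, |ψ x| ≤ C) : (Fr V W ψ : EReal) ≤ Efun V W := by
  letI := TopologicalSpace.upgradeIsCompletelyMetrizable X
  -- it suffices to prove it up to ε
  have key : ∀ ε : ℝ, 0 < ε → ((Fr V W ψ - ε : ℝ) : EReal) ≤ Efun V W := by
    intro ε hε
    set ε' : ℝ := ε / (1 + Real.exp C) with hε'def
    have hε' : 0 < ε' := div_pos hε (by positivity)
    have hψV : Integrable ψ V := integrable_of_bdd hψ.aestronglyMeasurable hb
    have hψW : Integrable ψ W := integrable_of_bdd hψ.aestronglyMeasurable hb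
    have hψVW : Integrable ψ (V + W) := integrable_of_bdd hψ.aestronglyMeasurable hb
    obtain ⟨g, hg, hgint⟩ := hψVW.exists_boundedContinuous_integral_sub_le hε'
    set φ : BoundedContinuousFunction X ℝ :=
      (g ⊔ BoundedContinuousFunction.const X (-C)) ⊓ BoundedContinuousFunction.const X C with hφdef
    have hφx : ∀ x, φ x = min (max (g x) (-C)) C := fun x => rfl
    have hφb : ∀ x, |φ x| ≤ C := by
      intro x
      rw [hφx, abs_le]
      constructor
      · exact le_min (le_max_right _ _) (by linarith)
      · exact min_le_right _ _
    have hclamp : ∀ x, |φ x - ψ x| ≤ |g x - ψ x| := fun x => by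
      rw [hφx]; exact clamp_abs_sub (hb x)
    -- integrabilities
    have hφV : Integrable (fun x => φ x) V := integrable_of_bdd
      φ.continuous.measurable.aestronglyMeasurable hφb
    have hexpφ : Integrable (fun x => Real.exp (φ x) - 1) W :=
      exp_integrable φ.continuous.measurable.aestronglyMeasurable hφb
    have hexpψ : Integrable (fun x => Real.exp (ψ x) - 1) W :=
      exp_integrable hψ.aestronglyMeasurable hb
    have hdiffVW : Integrable (fun x => ‖ψ x - g x‖) (V + W) := (hψVW.sub hgint).norm
    -- main estimate
    have hmain : Fr V W ψ - Fr V W φ ≤ ε := by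
      have e1 : Fr V W ψ - Fr V W φ
          = ∫ x, (ψ x - φ x) ∂V + ∫ x, ((Real.exp (φ x) - 1) - (Real.exp (ψ x) - 1)) ∂W := by
        rw [integral_sub hψV hφV, integral_sub hexpφ hexpψ]; unfold Fr; ring
      have e2 : ∫ x, (ψ x - φ x) ∂V ≤ ∫ x, ‖ψ x - g x‖ ∂V := by
        refine integral_mono (hψV.sub hφV) (hdiffVW.mono_measure (Measure.le_add_right le_rfl))
          fun x => ?_
        calc ψ x - φ x ≤ |φ x - ψ x| := by rw [abs_sub_comm]; exact le_abs_self _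
        _ ≤ |g x - ψ x| := hclamp x
        _ = ‖ψ x - g x‖ := by rw [Real.norm_eq_abs, abs_sub_comm]
      have e3 : ∫ x, ((Real.exp (φ x) - 1) - (Real.exp (ψ x) - 1)) ∂W
          ≤ Real.exp C * ∫ x, ‖ψ x - g x‖ ∂W := by
        rw [← integral_const_mul]
        refine integral_mono (hexpφ.sub hexpψ)
          ((hdiffVW.mono_measure (Measure.le_add_left le_rfl)).const_mul _) fun x => ?_
        have : |Real.exp (φ x) - Real.exp (ψ x)| ≤ Real.exp C * |φ x - ψ x| :=
          exp_sub_exp_abs_le ((le_abs_self _).trans (hφb x)) ((le_abs_self _).trans (hb x))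
        calc (Real.exp (φ x) - 1) - (Real.exp (ψ x) - 1) = Real.exp (φ x) - Real.exp (ψ x) := by
              ring
        _ ≤ |Real.exp (φ x) - Real.exp (ψ x)| := le_abs_self _
        _ ≤ Real.exp C * |φ x - ψ x| := this
        _ ≤ Real.exp C * ‖ψ x - g x‖ := by
              refine mul_le_mul_of_nonneg_left ?_ (Real.exp_pos C).le
              rw [Real.norm_eq_abs, abs_sub_comm (ψ x) (g x)]
              exact hclamp x
      have e4 : ∫ x, ‖ψ x - g x‖ ∂V + Real.exp C * ∫ x, ‖ψ x - g x‖ ∂W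
          ≤ (1 + Real.exp C) * ε' := by
        have hsplit : ∫ x, ‖ψ x - g x‖ ∂(V + W)
            = ∫ x, ‖ψ x - g x‖ ∂V + ∫ x, ‖ψ x - g x‖ ∂W := integral_add_measure
          (hdiffVW.mono_measure (Measure.le_add_right le_rfl))
          (hdiffVW.mono_measure (Measure.le_add_left le_rfl))
        have hVpos : 0 ≤ ∫ x, ‖ψ x - g x‖ ∂V := integral_nonneg fun x => norm_nonneg _
        have hWpos : 0 ≤ ∫ x, ‖ψ x - g x‖ ∂W := integral_nonneg fun x => norm_nonneg _
        have h1 : ∫ x, ‖ψ x - g x‖ ∂V ≤ ε' := by rw [hsplit] at hg; linarith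
        have h2 : ∫ x, ‖ψ x - g x‖ ∂W ≤ ε' := by rw [hsplit] at hg; linarith
        nlinarith [Real.exp_pos C]
      have : (1 + Real.exp C) * ε' = ε := by
        rw [hε'def]; field_simp
      linarith
    have hle : ((Fr V W φ : ℝ) : EReal) ≤ Efun V W := le_iSup
      (fun φ : BoundedContinuousFunction X ℝ =>
        ((∫ x, φ x ∂V - ∫ x, (Real.exp (φ x) - 1) ∂W : ℝ) : EReal)) φ
    exact le_trans (EReal.coe_le_coe_iff.2 (by linarith)) hle
  -- pass to the limit ε → 0
  have hseq : Tendsto (fun n : ℕ => ((Fr V W ψ - 1 / (n + 1) : ℝ) : EReal)) atTop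
      (𝓝 ((Fr V W ψ : ℝ) : EReal)) := by
    refine EReal.tendsto_coe.2 ?_
    have := tendsto_one_div_add_atTop_nhds_zero_nat (𝕜 := ℝ)
    simpa using (tendsto_const_nhds (x := Fr V W ψ) (f := atTop (α := ℕ))).sub this
  exact le_of_tendsto hseq (Eventually.of_forall fun n =>
    key _ (by positivity))

end Approx

section Upper

variable {X : Type*} [MeasurableSpace X] [TopologicalSpace X] [OpensMeasurableSpace X]
  (V W : Measure X) [IsFiniteMeasure V] [IsFiniteMeasure W]

lemma Fr_le_entropy (hAC : V ≪ W)
    (hInt : Integrable (fun x => Real.log ((V.rnDeriv W x).toReal)) V)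
    (φ : BoundedContinuousFunction X ℝ) :
    ∫ x, φ x ∂V - ∫ x, (Real.exp (φ x) - 1) ∂W
      ≤ ∫ x, Real.log ((V.rnDeriv W x).toReal) ∂V
          - (V Set.univ).toReal + (W Set.univ).toReal := by
  set f : X → ℝ := fun x => (V.rnDeriv W x).toReal with hf
  have hfmeas : Measurable f := (Measure.measurable_rnDeriv V W).ennreal_toReal
  have hfnonneg : ∀ x, 0 ≤ f x := fun x => ENNReal.toReal_nonneg
  have hφb : ∀ x, |φ x| ≤ ‖φ‖ := fun x => φ.norm_coe_le_norm x
  have hφV : Integrable (fun x => φ x) V :=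
    integrable_of_bdd φ.continuous.measurable.aestronglyMeasurable hφb
  have hexpφ : Integrable (fun x => Real.exp (φ x)) W := by
    refine integrable_of_bdd (C := Real.exp ‖φ‖)
      (Real.continuous_exp.comp_aestronglyMeasurable
        φ.continuous.measurable.aestronglyMeasurable) fun x => ?_
    rw [abs_of_nonneg (Real.exp_pos _).le]
    exact Real.exp_le_exp.2 ((le_abs_self _).trans (hφb x))
  -- ∫ φ dV = ∫ f * φ dW
  have h1 : ∫ x, f x * φ x ∂W = ∫ x, φ x ∂V := integral_rnDeriv_smul hAC
  -- ∫ f * log f dW = ∫ log f dV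
  have h2 : ∫ x, f x * Real.log (f x) ∂W = ∫ x, Real.log (f x) ∂V := integral_rnDeriv_smul hAC
  have h3 : ∫ x, f x ∂W = (V Set.univ).toReal := Measure.integral_toReal_rnDeriv hAC
  -- integrabilities over W
  have hfφW : Integrable (fun x => f x * φ x) W := by
    have := (integrable_rnDeriv_smul_iff hAC (f := fun x => φ x)).2 hφV
    simpa [hf, smul_eq_mul] using this
  have hflogfW : Integrable (fun x => f x * Real.log (f x)) W := by
    have := (integrable_rnDeriv_smul_iff hAC
      (f := fun x => Real.log ((V.rnDeriv W x).toReal))).2 hInt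
    simpa [hf, smul_eq_mul] using this
  have hfW : Integrable f W := Measure.integrable_toReal_rnDeriv
  -- pointwise Young inequality
  have hpt : ∀ x, f x * φ x ≤ f x * Real.log (f x) - f x + Real.exp (φ x) := fun x =>
    young_ineq (hfnonneg x) (φ x)
  have hmono : ∫ x, f x * φ x ∂W
      ≤ ∫ x, (f x * Real.log (f x) - f x + Real.exp (φ x)) ∂W :=
    integral_mono hfφW ((hflogfW.sub hfW).add hexpφ) hpt
  have hsub : Integrable (fun x => f x * Real.log (f x) - f x) W := hflogfW.sub hfW
  rw [integral_add hsub hexpφ, integral_sub hflogfW hfW, h1, h2, h3] at hmono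
  have h4 : ∫ x, (Real.exp (φ x) - 1) ∂W = ∫ x, Real.exp (φ x) ∂W - (W Set.univ).toReal := by
    rw [integral_sub hexpφ (integrable_const 1), integral_const, smul_eq_mul, mul_one, measureReal_def]
  rw [h4]
  linarith

end Upper

section NoInt

variable {X : Type*} [MeasurableSpace X] (V W : Measure X) [IsFiniteMeasure V] [IsFiniteMeasure W]

lemma unbounded_of_not_integrable (hAC : V ≪ W)
    (hInt : ¬ Integrable (fun x => Real.log ((V.rnDeriv W x).toReal)) V) :
    ∀ M : ℝ, ∃ n : ℕ, M ≤ ∫ x, psin V W n x ∂V - ∫ x, (Real.exp (psin V W n x) - 1) ∂W := by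
  intro M
  set f : X → ℝ := fun x => (V.rnDeriv W x).toReal with hfdef
  have hfmeas : Measurable f := (Measure.measurable_rnDeriv V W).ennreal_toReal
  set Lpos : X → ℝ := fun x => max (Real.log (f x)) 0 with hLposdef
  set Lneg : X → ℝ := fun x => max (-(Real.log (f x))) 0 with hLnegdef
  have hLposmeas : Measurable Lpos := (hfmeas.log).max measurable_const
  have hLnegmeas : Measurable Lneg := (hfmeas.log.neg).max measurable_const
  -- Lneg is integrable wrt V
  have hLnegInt : Integrable Lneg V := by
    have h1 : Integrable (fun x => (V.rnDeriv W x).toReal • Lneg x) W := by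
      refine integrable_of_bdd (C := 1)
        ((hfmeas.smul hLnegmeas).aestronglyMeasurable) fun x => ?_
      rw [abs_of_nonneg (by
        exact mul_nonneg ENNReal.toReal_nonneg (le_max_right _ _))]
      exact mul_neg_log_le_one ENNReal.toReal_nonneg
    exact (integrable_rnDeriv_smul_iff hAC).1 h1
  -- Lpos is not integrable
  have hLposNoInt : ¬ Integrable Lpos V := by
    intro hcon
    refine hInt ?_
    have : (fun x => Real.log ((V.rnDeriv W x).toReal)) = fun x => Lpos x - Lneg x := by
      funext x
      simp only [hLposdef, hLnegdef]
      rcases le_total (Real.log (f x)) 0 with h | h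
      · rw [max_eq_right h, max_eq_left (by linarith)]; simp [hfdef]
      · rw [max_eq_left h, max_eq_right (by linarith)]; simp [hfdef]
    rw [this]
    exact hcon.sub hLnegInt
  -- lintegral of Lpos is infinite
  have hLposTop : ∫⁻ x, ENNReal.ofReal (Lpos x) ∂V = ⊤ := by
    by_contra hne
    refine hLposNoInt ⟨hLposmeas.aestronglyMeasurable, ?_⟩
    rw [hasFiniteIntegral_iff_norm]
    have : ∀ x, ENNReal.ofReal ‖Lpos x‖ = ENNReal.ofReal (Lpos x) := fun x => by
      rw [Real.norm_eq_abs, abs_of_nonneg (le_max_right _ _)]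
    simp only [this]
    exact lt_top_iff_ne_top.2 hne
  -- sup over n of ∫⁻ min (Lpos) n = ⊤
  have hsup : ⨆ n : ℕ, ∫⁻ x, ENNReal.ofReal (min (Lpos x) (n : ℝ)) ∂V = ⊤ := by
    rw [← lintegral_iSup (fun n => (hLposmeas.min measurable_const).ennreal_ofReal)
      (fun n m hnm x => ENNReal.ofReal_le_ofReal (le_min (min_le_left _ _)
        ((min_le_right _ _).trans (Nat.cast_le.2 hnm))))]
    rw [← hLposTop]
    congr 1
    funext x
    refine le_antisymm (iSup_le fun n => ENNReal.ofReal_le_ofReal (min_le_left _ _)) ?_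
    refine le_iSup_of_le ⌈Lpos x⌉₊ (ENNReal.ofReal_le_ofReal ?_)
    exact le_min le_rfl (Nat.le_ceil _)
  -- the integrals ∫ min (Lpos) n dV are unbounded
  have hunbdd : ∀ K : ℝ, ∃ n : ℕ, K ≤ ∫ x, min (Lpos x) (n:ℝ) ∂V := by
    intro K
    have : ENNReal.ofReal K < ⨆ n : ℕ, ∫⁻ x, ENNReal.ofReal (min (Lpos x) (n : ℝ)) ∂V := by
      rw [hsup]; exact ENNReal.ofReal_lt_top.trans_le le_top
    obtain ⟨n, hn⟩ := lt_iSup_iff.1 this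
    refine ⟨n, ?_⟩
    have hfin : ∫⁻ x, ENNReal.ofReal (min (Lpos x) (n : ℝ)) ∂V ≠ ⊤ := by
      have hconst : ∫⁻ _, ENNReal.ofReal (n:ℝ) ∂V < ⊤ := by
        rw [lintegral_const]
        exact ENNReal.mul_lt_top ENNReal.ofReal_lt_top (measure_lt_top V _)
      refine ne_of_lt (lt_of_le_of_lt (lintegral_mono fun x => ?_) hconst)
      exact ENNReal.ofReal_le_ofReal (min_le_right _ _)
    have heq : ∫ x, min (Lpos x) (n:ℝ) ∂V
        = (∫⁻ x, ENNReal.ofReal (min (Lpos x) (n : ℝ)) ∂V).toReal :=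
      integral_eq_lintegral_of_nonneg_ae
        (Eventually.of_forall fun x => le_min (le_max_right _ _) (Nat.cast_nonneg n))
        (hLposmeas.min measurable_const).aestronglyMeasurable
    rw [heq]
    exact (ENNReal.ofReal_le_iff_le_toReal hfin).1 hn.le
  -- pointwise lower bound for psin
  have hlow : ∀ n : ℕ, ∀ᵐ x ∂V, min (Lpos x) (n:ℝ) - Lneg x ≤ psin V W n x := by
    intro n
    filter_upwards [Measure.rnDeriv_pos hAC, hAC.ae_le (Measure.rnDeriv_lt_top V W)]
      with x hx hx'
    have ht : 0 < f x := ENNReal.toReal_pos hx.ne' hx'.ne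
    have hexpn : Real.exp (-(n:ℝ)) ≤ Real.exp (n:ℝ) :=
      Real.exp_le_exp.2 (neg_le_self (Nat.cast_nonneg n))
    unfold psin
    rcases le_total 1 (f x) with h1 | h1
    · -- f ≥ 1
      have hLneg0 : Lneg x = 0 := max_eq_right (by
        simpa using Real.log_nonneg h1)
      have hmax : max (f x) (Real.exp (-(n : ℝ))) = f x :=
        max_eq_left ((Real.exp_le_one_iff.2 (neg_nonpos.2 (Nat.cast_nonneg n))).trans h1)
      rw [hLneg0, hmax, sub_zero]
      rcases le_total (f x) (Real.exp (n:ℝ)) with h2 | h2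
      · rw [min_eq_left h2]
        refine le_trans (min_le_left _ _) ?_
        simp only [hLposdef]
        exact max_le le_rfl (Real.log_nonneg h1)
      · rw [min_eq_right h2, Real.log_exp]
        exact min_le_right _ _
    · -- f ≤ 1
      have hLpos0 : min (Lpos x) (n:ℝ) = 0 := by
        rw [hLposdef]
        simp only
        rw [max_eq_right (Real.log_nonpos ht.le h1)]
        exact min_eq_left (Nat.cast_nonneg n)
      have hmin : min (max (f x) (Real.exp (-(n : ℝ)))) (Real.exp (n : ℝ))
          = max (f x) (Real.exp (-(n : ℝ))) := by
        refine min_eq_left (max_le (h1.trans (Real.one_le_exp (Nat.cast_nonneg n))) hexpn)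
      rw [hLpos0, hmin, zero_sub]
      have : Real.log (f x) ≤ Real.log (max (f x) (Real.exp (-(n : ℝ)))) :=
        Real.log_le_log ht (le_max_left _ _)
      simp only [hLnegdef]
      rcases le_total (Real.log (f x)) 0 with h2 | h2
      · rw [max_eq_left (by linarith)]; linarith
      · have h0 : Real.log (f x) = 0 := le_antisymm (Real.log_nonpos ht.le h1) h2
        rw [max_eq_right (by simp [h0] : -Real.log (f x) ≤ 0)]
        rw [h0] at this
        simpa using this
  -- assemble
  set C0 : ℝ := ∫ x, (f x + 1) ∂W with hC0def
  have hfWInt : Integrable (fun x => f x + 1) W :=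
    Measure.integrable_toReal_rnDeriv.add (integrable_const 1)
  have hLnegNonneg : 0 ≤ ∫ x, Lneg x ∂V := integral_nonneg fun x => le_max_right _ _
  obtain ⟨n, hn⟩ := hunbdd (M + C0 + ∫ x, Lneg x ∂V)
  refine ⟨n, ?_⟩
  -- bound the W-integral
  have hexpInt : Integrable (fun x => Real.exp (psin V W n x) - 1) W := by
    refine (integrable_of_bdd (C := Real.exp (n:ℝ))
      ((psin_measurable V W n).exp.aestronglyMeasurable)
      fun x => ?_).sub (integrable_const 1)
    rw [abs_of_nonneg (Real.exp_pos _).le]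
    exact Real.exp_le_exp.2 ((le_abs_self _).trans (psin_abs_le V W n x))
  have hB : ∫ x, (Real.exp (psin V W n x) - 1) ∂W ≤ C0 := by
    refine integral_mono hexpInt hfWInt fun x => ?_
    rw [exp_psin]
    have h0 : (0:ℝ) ≤ f x := ENNReal.toReal_nonneg
    have he1 : Real.exp (-(n:ℝ)) ≤ 1 := Real.exp_le_one_iff.2 (neg_nonpos.2 (Nat.cast_nonneg n))
    calc min (max ((V.rnDeriv W x).toReal) (Real.exp (-(n : ℝ)))) (Real.exp (n : ℝ)) - 1
        ≤ max (f x) (Real.exp (-(n : ℝ))) - 1 := by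
          exact sub_le_sub_right (min_le_left _ _) 1
      _ ≤ (f x + 1) - 1 := sub_le_sub_right (max_le (by linarith) (by linarith)) 1
      _ ≤ f x + 1 := by linarith
  -- bound the V-integral from below
  have hminInt : Integrable (fun x => min (Lpos x) (n:ℝ)) V := by
    refine integrable_of_bdd (C := (n:ℝ))
      ((hLposmeas.min measurable_const).aestronglyMeasurable) fun x => ?_
    rw [abs_of_nonneg (le_min (le_max_right _ _) (Nat.cast_nonneg n))]
    exact min_le_right _ _
  have hA : ∫ x, min (Lpos x) (n:ℝ) ∂V - ∫ x, Lneg x ∂V ≤ ∫ x, psin V W n x ∂V := by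
    rw [← integral_sub hminInt hLnegInt]
    exact integral_mono_ae (hminInt.sub hLnegInt) (psin_integrable V W n) (hlow n)
  linarith

end NoInt

section Main

variable {X : Type*} [MeasurableSpace X] [TopologicalSpace X] [PolishSpace X] [BorelSpace X]
  (V W : Measure X) [IsFiniteMeasure V] [IsFiniteMeasure W]

lemma Efun_eq_top_of_forall (h : ∀ M : ℝ, (M : EReal) ≤ Efun V W) : Efun V W = ⊤ :=
  (EReal.eq_top_iff_forall_lt _).2 fun y =>
    lt_of_lt_of_le (EReal.coe_lt_coe_iff.2 (lt_add_one y)) (h (y + 1))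

lemma Efun_eq_top_of_not_ac (h : ¬ V ≪ W) : Efun V W = ⊤ := by
  refine Efun_eq_top_of_forall V W fun M => ?_
  have h' : ¬ ∀ ⦃s : Set X⦄, W s = 0 → V s = 0 := h
  push_neg at h'
  obtain ⟨s, hws, hvs⟩ := h'
  set t := toMeasurable W s with htdef
  have hwt : W t = 0 := by rwa [measure_toMeasurable]
  have hvt : V t ≠ 0 := fun h0 => hvs (measure_mono_null (subset_toMeasurable W s) h0)
  have htm : MeasurableSet t := measurableSet_toMeasurable W s
  have htpos : 0 < (V t).toReal := ENNReal.toReal_pos hvt (measure_ne_top V t)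
  set n : ℕ := ⌈M / (V t).toReal⌉₊ with hndef
  set ψ : X → ℝ := t.indicator (fun _ => (n : ℝ)) with hψdef
  have hψmeas : Measurable ψ := measurable_const.indicator htm
  have hψb : ∀ x, |ψ x| ≤ (n : ℝ) := by
    intro x
    rw [hψdef, Set.indicator]
    split_ifs <;> simp
  have hFr : Fr V W ψ = (V t).toReal * (n : ℝ) := by
    unfold Fr
    have h1 : ∫ x, ψ x ∂V = (V t).toReal • (n : ℝ) := integral_indicator_const _ htm
    have h2 : ∫ x, (Real.exp (ψ x) - 1) ∂W = 0 := by
      have hae : (fun x => Real.exp (ψ x) - 1) =ᵐ[W] 0 := by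
        filter_upwards [measure_eq_zero_iff_ae_notMem.1 hwt] with x hx
        simp [hψdef, Set.indicator_of_notMem hx]
      rw [integral_congr_ae hae]; simp
    rw [h1, h2, smul_eq_mul, sub_zero]
  have hM : M ≤ Fr V W ψ := by
    rw [hFr]
    calc M = (M / (V t).toReal) * (V t).toReal := (div_mul_cancel₀ M htpos.ne').symm
    _ ≤ (n : ℝ) * (V t).toReal := mul_le_mul_of_nonneg_right (Nat.le_ceil _) htpos.le
    _ = (V t).toReal * (n : ℝ) := mul_comm _ _
  exact (EReal.coe_le_coe_iff.2 hM).trans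
    (Fr_le_Efun V W hψmeas (Nat.cast_nonneg n) hψb)

end Main

open scoped Classical in
/-- `E(V | Ṽ)` equals `∫ log(dV/dṼ) dV − V(X) + Ṽ(X)` if `V ≪ Ṽ`, and `+∞` otherwise. -/
theorem Efun_eq {X : Type*} [MeasurableSpace X] [TopologicalSpace X] [PolishSpace X]
    [BorelSpace X] (V W : Measure X) [IsFiniteMeasure V] [IsFiniteMeasure W] :
    Efun V W =
      if V ≪ W ∧ Integrable (fun x => Real.log ((V.rnDeriv W x).toReal)) V
      then ((∫ x, Real.log ((V.rnDeriv W x).toReal) ∂V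
              - (V Set.univ).toReal + (W Set.univ).toReal : ℝ) : EReal)
      else ⊤ := by
  split_ifs with h
  · obtain ⟨hAC, hInt⟩ := h
    refine le_antisymm ?_ ?_
    · exact iSup_le fun φ => EReal.coe_le_coe_iff.2 (Fr_le_entropy V W hAC hInt φ)
    · have h1 := tendsto_integral_psin V W hAC hInt
      have h2 := tendsto_integral_exp_psin V W
      rw [Measure.integral_toReal_rnDeriv hAC] at h2
      have h3 : Tendsto (fun n : ℕ => Fr V W (psin V W n)) atTop
          (𝓝 (∫ x, Real.log ((V.rnDeriv W x).toReal) ∂V - (V Set.univ).toReal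
              + (W Set.univ).toReal)) := by
        have heq : ∀ n : ℕ, Fr V W (psin V W n)
            = ∫ x, psin V W n x ∂V - ∫ x, Real.exp (psin V W n x) ∂W
              + (W Set.univ).toReal := by
          intro n
          unfold Fr
          have hexpInt : Integrable (fun x => Real.exp (psin V W n x)) W :=
            integrable_of_bdd (psin_measurable V W n).exp.aestronglyMeasurable
              (C := Real.exp (n : ℝ)) (fun x => by
                rw [abs_of_nonneg (Real.exp_pos _).le]
                exact Real.exp_le_exp.2 ((le_abs_self _).trans (psin_abs_le V W n x)))
          rw [integral_sub hexpInt (integrable_const 1), integral_const, smul_eq_mul, mul_one, measureReal_def]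
          ring
        simp only [heq]
        exact (h1.sub h2).add_const _
      refine le_of_tendsto (EReal.tendsto_coe.2 h3) (Eventually.of_forall fun n => ?_)
      exact Fr_le_Efun V W (psin_measurable V W n) (Nat.cast_nonneg n) (psin_abs_le V W n)
  · by_cases hAC : V ≪ W
    · have hInt : ¬ Integrable (fun x => Real.log ((V.rnDeriv W x).toReal)) V :=
        fun hi => h ⟨hAC, hi⟩
      refine Efun_eq_top_of_forall V W fun M => ?_
      obtain ⟨n, hn⟩ := unbounded_of_not_integrable V W hAC hInt M
      exact (EReal.coe_le_coe_iff.2 hn).trans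
        (Fr_le_Efun V W (psin_measurable V W n) (Nat.cast_nonneg n) (psin_abs_le V W n))
    · exact Efun_eq_top_of_not_ac V W hAC
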